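/- arXiv:1904.08473 — 3 statements merged into one kernel-verified Lean document; each statement's English description precedes it below -/
import Mathlib

section
/- Let M = (S, A, P, r, γ) be a finite MDP with γ ∈ (0,1), p0 an initial state distribution, and μ a behavior policy. Suppose a policy π is covered by μ, i.e., d^μ(s) > 0 for every s with d^π(s) > 0, and μ(a|s) > 0 for every (s,a) with d^π(s) > 0 and π(a|s) > 0 (in particular, any optimal policy π* satisfying the paper's Assumption 1). Then the normalized expected returns coincide: R_M^π = R_{M_μ}^π. -/
open scoped BigOperators
open Finset

noncomputable section

/-- One-step state-distribution update under policy `π` (here `π s a` denotes `π(a|s)`). -/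
def nextDist {S A : Type} [Fintype S] [Fintype A]
    (P : S → A → S → ℝ) (π : S → A → ℝ) (d : S → ℝ) : S → ℝ :=
  fun s' => ∑ s, ∑ a, d s * π s a * P s a s'

/-- The time-`t` state distribution `d_t^π`. -/
def stateDist {S A : Type} [Fintype S] [Fintype A]
    (P : S → A → S → ℝ) (π : S → A → ℝ) (p0 : S → ℝ) : ℕ → S → ℝ
  | 0 => p0
  | t + 1 => nextDist P π (stateDist P π p0 t)

/-- The discounted state distribution `d^π`. -/
def discDist {S A : Type} [Fintype S] [Fintype A]
    (γ : ℝ) (P : S → A → S → ℝ) (π : S → A → ℝ) (p0 : S → ℝ) : S → ℝ :=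
  fun s => (1 - γ) * ∑' t : ℕ, γ ^ t * stateDist P π p0 t s

/-- The normalized expected return `R^π_M`. -/
def expReturn {S A : Type} [Fintype S] [Fintype A]
    (γ : ℝ) (P : S → A → S → ℝ) (r : S → A → ℝ) (π : S → A → ℝ) (p0 : S → ℝ) : ℝ :=
  (1 - γ) * ∑' t : ℕ, γ ^ t * ∑ s, ∑ a, stateDist P π p0 t s * π s a * r s a

/-- Transition kernel of the augmented MDP `M_μ` on `Option S`, where `none` plays the
role of the absorbing state `s_abs` and `dμ` is the discounted state distribution of
the behavior policy `μ`.  States `some s` with `dμ s = 0` are given no incoming mass,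
so the reachable state space is exactly `S_μ ∪ {s_abs}`. -/
def augP {S A : Type} [Fintype S] [Fintype A]
    (P : S → A → S → ℝ) (dμ : S → ℝ) (μ : S → A → ℝ) : Option S → A → Option S → ℝ
  | none, _, none => 1
  | none, _, some _ => 0
  | some s, a, some s' => if 0 < dμ s * μ s a ∧ 0 < dμ s' then P s a s' else 0
  | some s, a, none =>
      if 0 < dμ s * μ s a then ∑ s' ∈ Finset.univ.filter (fun s' => ¬ 0 < dμ s'), P s a s'
      else 1

/-- Reward function of the augmented MDP `M_μ`. -/
def augR {S A : Type} (r : S → A → ℝ) (dμ : S → ℝ) (μ : S → A → ℝ) : Option S → A → ℝ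
  | none, _ => 0
  | some s, a => if 0 < dμ s * μ s a then r s a else 0

/-- Initial state distribution of the augmented MDP `M_μ`. -/
def augp0 {S : Type} (p0 : S → ℝ) : Option S → ℝ
  | none => 0
  | some s => p0 s

section AuxLemmas

variable {S A : Type} [Fintype S] [Fintype A]

lemma sd_nonneg (P : S → A → S → ℝ) (hP0 : ∀ s a s', 0 ≤ P s a s')
    (π : S → A → ℝ) (hπ0 : ∀ s a, 0 ≤ π s a)
    (p0 : S → ℝ) (hp00 : ∀ s, 0 ≤ p0 s) : ∀ t s, 0 ≤ stateDist P π p0 t s := by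
  intro t
  induction t with
  | zero => exact hp00
  | succ t ih =>
    intro s'
    exact Finset.sum_nonneg fun s _ => Finset.sum_nonneg fun a _ =>
      mul_nonneg (mul_nonneg (ih s) (hπ0 s a)) (hP0 s a s')

lemma sd_mass (P : S → A → S → ℝ) (hP1 : ∀ s a, ∑ s', P s a s' = 1)
    (π : S → A → ℝ) (hπ1 : ∀ s, ∑ a, π s a = 1)
    (p0 : S → ℝ) (hp01 : ∑ s, p0 s = 1) : ∀ t, ∑ s, stateDist P π p0 t s = 1 := by
  intro t
  induction t with
  | zero => exact hp01
  | succ t ih =>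
    show ∑ s', ∑ s, ∑ a, stateDist P π p0 t s * π s a * P s a s' = 1
    rw [Finset.sum_comm]
    calc ∑ s, ∑ s', ∑ a, stateDist P π p0 t s * π s a * P s a s'
        = ∑ s, ∑ a, ∑ s', stateDist P π p0 t s * π s a * P s a s' := by
          exact Finset.sum_congr rfl fun s _ => Finset.sum_comm
      _ = ∑ s, ∑ a, stateDist P π p0 t s * π s a := by
          refine Finset.sum_congr rfl fun s _ => Finset.sum_congr rfl fun a _ => ?_
          rw [← Finset.mul_sum, hP1, mul_one]
      _ = ∑ s, stateDist P π p0 t s := by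
          refine Finset.sum_congr rfl fun s _ => ?_
          rw [← Finset.mul_sum, hπ1, mul_one]
      _ = 1 := ih

lemma sd_le_one (P : S → A → S → ℝ) (hP0 : ∀ s a s', 0 ≤ P s a s')
    (hP1 : ∀ s a, ∑ s', P s a s' = 1)
    (π : S → A → ℝ) (hπ0 : ∀ s a, 0 ≤ π s a) (hπ1 : ∀ s, ∑ a, π s a = 1)
    (p0 : S → ℝ) (hp00 : ∀ s, 0 ≤ p0 s) (hp01 : ∑ s, p0 s = 1) :
    ∀ t s, stateDist P π p0 t s ≤ 1 := by
  intro t s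
  calc stateDist P π p0 t s ≤ ∑ s', stateDist P π p0 t s' :=
        Finset.single_le_sum (fun s' _ => sd_nonneg P hP0 π hπ0 p0 hp00 t s')
          (Finset.mem_univ s)
    _ = 1 := sd_mass P hP1 π hπ1 p0 hp01 t

lemma sd_summable {γ : ℝ} (hγ0 : 0 < γ) (hγ1 : γ < 1)
    (P : S → A → S → ℝ) (hP0 : ∀ s a s', 0 ≤ P s a s')
    (hP1 : ∀ s a, ∑ s', P s a s' = 1)
    (π : S → A → ℝ) (hπ0 : ∀ s a, 0 ≤ π s a) (hπ1 : ∀ s, ∑ a, π s a = 1)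
    (p0 : S → ℝ) (hp00 : ∀ s, 0 ≤ p0 s) (hp01 : ∑ s, p0 s = 1) (s : S) :
    Summable (fun t : ℕ => γ ^ t * stateDist P π p0 t s) := by
  refine Summable.of_nonneg_of_le
    (fun t => mul_nonneg (pow_nonneg hγ0.le t) (sd_nonneg P hP0 π hπ0 p0 hp00 t s))
    (fun t => ?_) (summable_geometric_of_lt_one hγ0.le hγ1)
  calc γ ^ t * stateDist P π p0 t s ≤ γ ^ t * 1 := by
        exact mul_le_mul_of_nonneg_left (sd_le_one P hP0 hP1 π hπ0 hπ1 p0 hp00 hp01 t s)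
          (pow_nonneg hγ0.le t)
    _ = γ ^ t := mul_one _

lemma disc_pos {γ : ℝ} (hγ0 : 0 < γ) (hγ1 : γ < 1)
    (P : S → A → S → ℝ) (hP0 : ∀ s a s', 0 ≤ P s a s')
    (hP1 : ∀ s a, ∑ s', P s a s' = 1)
    (π : S → A → ℝ) (hπ0 : ∀ s a, 0 ≤ π s a) (hπ1 : ∀ s, ∑ a, π s a = 1)
    (p0 : S → ℝ) (hp00 : ∀ s, 0 ≤ p0 s) (hp01 : ∑ s, p0 s = 1)
    {t : ℕ} {s : S} (h : 0 < stateDist P π p0 t s) : 0 < discDist γ P π p0 s := by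
  refine mul_pos (by linarith) ?_
  refine Summable.tsum_pos (sd_summable hγ0 hγ1 P hP0 hP1 π hπ0 hπ1 p0 hp00 hp01 s)
    (fun t' => mul_nonneg (pow_nonneg hγ0.le t') (sd_nonneg P hP0 π hπ0 p0 hp00 t' s)) t ?_
  exact mul_pos (pow_pos hγ0 t) h

end AuxLemmas

/-- If a policy `π` is covered by the behavior policy `μ`
(`d^μ(s) > 0` whenever `d^π(s) > 0`, and `μ(a|s) > 0` whenever `d^π(s) > 0` and
`π(a|s) > 0`), then the normalized expected return of `π` in the original MDP `M`
coincides with its normalized expected return in the augmented MDP `M_μ`. -/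
theorem augmented_return_eq_of_covered {S A : Type} [Fintype S] [Fintype A]
    (γ : ℝ) (hγ0 : 0 < γ) (hγ1 : γ < 1)
    (P : S → A → S → ℝ) (hP0 : ∀ s a s', 0 ≤ P s a s') (hP1 : ∀ s a, ∑ s', P s a s' = 1)
    (r : S → A → ℝ) (hr0 : ∀ s a, 0 ≤ r s a) (hr1 : ∀ s a, r s a ≤ 1)
    (p0 : S → ℝ) (hp00 : ∀ s, 0 ≤ p0 s) (hp01 : ∑ s, p0 s = 1)
    (μ : S → A → ℝ) (hμ0 : ∀ s a, 0 ≤ μ s a) (hμ1 : ∀ s, ∑ a, μ s a = 1)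
    (π : S → A → ℝ) (hπ0 : ∀ s a, 0 ≤ π s a) (hπ1 : ∀ s, ∑ a, π s a = 1)
    (hcovS : ∀ s, 0 < discDist γ P π p0 s → 0 < discDist γ P μ p0 s)
    (hcovA : ∀ s a, 0 < discDist γ P π p0 s → 0 < π s a → 0 < μ s a)
    (πa : Option S → A → ℝ) (hπa0 : ∀ s a, 0 ≤ πa s a) (hπa1 : ∀ s, ∑ a, πa s a = 1)
    (hagree : ∀ s a, πa (some s) a = π s a) :
    expReturn γ (augP P (discDist γ P μ p0) μ) (augR r (discDist γ P μ p0) μ) πa (augp0 p0)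
      = expReturn γ P r π p0 := by
  set dμ : S → ℝ := discDist γ P μ p0 with hdμ
  -- key positivity fact
  have key : ∀ (t : ℕ) (s : S) (a : A), 0 < stateDist P π p0 t s → 0 < π s a →
      0 < dμ s * μ s a := by
    intro t s a hs ha
    have hd : 0 < discDist γ P π p0 s :=
      disc_pos hγ0 hγ1 P hP0 hP1 π hπ0 hπ1 p0 hp00 hp01 hs
    exact mul_pos (hcovS s hd) (hcovA s a hd ha)
  have sdnn := sd_nonneg P hP0 π hπ0 p0 hp00
  -- the state distributions on `some s` agree for every t
  have hsd : ∀ t s, stateDist (augP P dμ μ) πa (augp0 p0) t (some s)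
      = stateDist P π p0 t s := by
    intro t
    induction t with
    | zero => intro s; rfl
    | succ t ih =>
      intro s'
      show ∑ os : Option S, ∑ a,
          stateDist (augP P dμ μ) πa (augp0 p0) t os * πa os a * augP P dμ μ os a (some s')
        = ∑ s, ∑ a, stateDist P π p0 t s * π s a * P s a s'
      rw [Fintype.sum_option]
      have hnone : ∀ a : A, augP P dμ μ none a (some s') = 0 := fun a => rfl
      simp only [hnone, mul_zero, Finset.sum_const_zero, zero_add]
      refine Finset.sum_congr rfl fun s _ => Finset.sum_congr rfl fun a _ => ?_
      rw [ih s, hagree s a]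
      show stateDist P π p0 t s * π s a *
          (if 0 < dμ s * μ s a ∧ 0 < dμ s' then P s a s' else 0)
        = stateDist P π p0 t s * π s a * P s a s'
      rcases eq_or_lt_of_le (sdnn t s) with hs | hs
      · rw [← hs]; ring
      rcases eq_or_lt_of_le (hπ0 s a) with hp | hp
      · rw [← hp]; ring
      rcases eq_or_lt_of_le (hP0 s a s') with hP | hP
      · rw [← hP]; simp
      have hterm : 0 < stateDist P π p0 (t + 1) s' := by
        have h1 : stateDist P π p0 t s * π s a * P s a s'
            ≤ ∑ a', stateDist P π p0 t s * π s a' * P s a' s' :=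
          Finset.single_le_sum
            (fun a' _ => mul_nonneg (mul_nonneg (sdnn t s) (hπ0 s a')) (hP0 s a' s'))
            (Finset.mem_univ a)
        have h2 : (∑ a', stateDist P π p0 t s * π s a' * P s a' s')
            ≤ ∑ s₁, ∑ a', stateDist P π p0 t s₁ * π s₁ a' * P s₁ a' s' :=
          Finset.single_le_sum
            (fun s₁ _ => Finset.sum_nonneg fun a' _ =>
              mul_nonneg (mul_nonneg (sdnn t s₁) (hπ0 s₁ a')) (hP0 s₁ a' s'))
            (Finset.mem_univ s)
        have : 0 < stateDist P π p0 t s * π s a * P s a s' :=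
          mul_pos (mul_pos hs hp) hP
        show (0:ℝ) < ∑ s₁, ∑ a', stateDist P π p0 t s₁ * π s₁ a' * P s₁ a' s'
        linarith
      have hds' : 0 < dμ s' :=
        hcovS s' (disc_pos hγ0 hγ1 P hP0 hP1 π hπ0 hπ1 p0 hp00 hp01 hterm)
      rw [if_pos ⟨key t s a hs hp, hds'⟩]
  -- conclude equality of returns
  unfold expReturn
  congr 1
  refine tsum_congr fun t => ?_
  congr 1
  rw [Fintype.sum_option]
  have hnone : ∀ a : A, augR r dμ μ none a = 0 := fun a => rfl
  simp only [hnone, mul_zero, Finset.sum_const_zero, zero_add]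
  refine Finset.sum_congr rfl fun s _ => Finset.sum_congr rfl fun a _ => ?_
  rw [hsd t s, hagree s a]
  show stateDist P π p0 t s * π s a * (if 0 < dμ s * μ s a then r s a else 0)
    = stateDist P π p0 t s * π s a * r s a
  rcases eq_or_lt_of_le (sdnn t s) with hs | hs
  · rw [← hs]; ring
  rcases eq_or_lt_of_le (hπ0 s a) with hp | hp
  · rw [← hp]; ring
  rw [if_pos (key t s a hs hp)]
end
end

section
/- Let (S, A, P, r, γ) be a finite MDP with γ ∈ (0,1), p0 an initial state distribution, and let π and μ be policies such that d^μ(s) > 0 for all s ∈ S and μ(a|s) > 0 for all (s,a). If w : S → ℝ satisfies L(w, f) = 0 for every function f : S → ℝ, then w(s) = d^π(s)/d^μ(s) for all s. -/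
open scoped BigOperators
open Finset

noncomputable section

/-- The functional `L(w,f)` of Liu et al. (discounted case), with `s ~ d^μ`, `a ~ μ(·|s)`,
`s' ~ P(·|s,a)`:
`L(w,f) = γ E[(w(s)π(a|s)/μ(a|s) − w(s')) f(s')] + (1−γ) E_{s~p0}[(1 − w(s)) f(s)]`. -/
def Lfun {S A : Type} [Fintype S] [Fintype A]
    (γ : ℝ) (P : S → A → S → ℝ) (π μ : S → A → ℝ) (dμ p0 : S → ℝ) (w f : S → ℝ) : ℝ :=
  γ * ∑ s, ∑ a, ∑ s', dμ s * μ s a * P s a s' * (w s * (π s a / μ s a) - w s') * f s' +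
    (1 - γ) * ∑ s, p0 s * (1 - w s) * f s

section Aux
variable {S A : Type} [Fintype S] [Fintype A]

lemma stateDist_nonneg (P : S → A → S → ℝ) (hP0 : ∀ s a s', 0 ≤ P s a s')
    (ρ : S → A → ℝ) (hρ0 : ∀ s a, 0 ≤ ρ s a) (p0 : S → ℝ) (hp00 : ∀ s, 0 ≤ p0 s) :
    ∀ t s, 0 ≤ stateDist P ρ p0 t s := by
  intro t
  induction t with
  | zero => exact hp00
  | succ t ih =>
    intro s'
    apply Finset.sum_nonneg; intro s _
    apply Finset.sum_nonneg; intro a _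
    exact mul_nonneg (mul_nonneg (ih s) (hρ0 s a)) (hP0 s a s')

lemma stateDist_sum (P : S → A → S → ℝ) (hP1 : ∀ s a, ∑ s', P s a s' = 1)
    (ρ : S → A → ℝ) (hρ1 : ∀ s, ∑ a, ρ s a = 1) (p0 : S → ℝ) (hp01 : ∑ s, p0 s = 1) :
    ∀ t, ∑ s, stateDist P ρ p0 t s = 1 := by
  intro t
  induction t with
  | zero => exact hp01
  | succ t ih =>
    show ∑ s', ∑ s, ∑ a, stateDist P ρ p0 t s * ρ s a * P s a s' = 1
    rw [Finset.sum_comm]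
    calc ∑ s, ∑ s', ∑ a, stateDist P ρ p0 t s * ρ s a * P s a s'
        = ∑ s, ∑ a, ∑ s', stateDist P ρ p0 t s * ρ s a * P s a s' :=
          Finset.sum_congr rfl fun s _ => Finset.sum_comm
      _ = ∑ s, stateDist P ρ p0 t s := by
          refine Finset.sum_congr rfl fun s _ => ?_
          have h : ∀ a, ∑ s', stateDist P ρ p0 t s * ρ s a * P s a s'
              = stateDist P ρ p0 t s * ρ s a := by
            intro a; rw [← Finset.mul_sum, hP1 s a, mul_one]
          simp_rw [h, ← Finset.mul_sum, hρ1 s, mul_one]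
      _ = 1 := ih

lemma stateDist_le_one (P : S → A → S → ℝ) (hP0 : ∀ s a s', 0 ≤ P s a s')
    (hP1 : ∀ s a, ∑ s', P s a s' = 1)
    (ρ : S → A → ℝ) (hρ0 : ∀ s a, 0 ≤ ρ s a) (hρ1 : ∀ s, ∑ a, ρ s a = 1)
    (p0 : S → ℝ) (hp00 : ∀ s, 0 ≤ p0 s) (hp01 : ∑ s, p0 s = 1)
    (t : ℕ) (s : S) : stateDist P ρ p0 t s ≤ 1 := by
  calc stateDist P ρ p0 t s ≤ ∑ s', stateDist P ρ p0 t s' :=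
        Finset.single_le_sum (fun s' _ => stateDist_nonneg P hP0 ρ hρ0 p0 hp00 t s')
          (Finset.mem_univ s)
    _ = 1 := stateDist_sum P hP1 ρ hρ1 p0 hp01 t

lemma summable_geom_stateDist {γ : ℝ} (hγ0 : 0 ≤ γ) (hγ1 : γ < 1)
    (P : S → A → S → ℝ) (hP0 : ∀ s a s', 0 ≤ P s a s')
    (hP1 : ∀ s a, ∑ s', P s a s' = 1)
    (ρ : S → A → ℝ) (hρ0 : ∀ s a, 0 ≤ ρ s a) (hρ1 : ∀ s, ∑ a, ρ s a = 1)
    (p0 : S → ℝ) (hp00 : ∀ s, 0 ≤ p0 s) (hp01 : ∑ s, p0 s = 1) (s : S) :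
    Summable (fun t : ℕ => γ ^ t * stateDist P ρ p0 t s) := by
  apply Summable.of_nonneg_of_le
    (fun t => mul_nonneg (pow_nonneg hγ0 t) (stateDist_nonneg P hP0 ρ hρ0 p0 hp00 t s))
    (fun t => ?_) (summable_geometric_of_lt_one hγ0 hγ1)
  calc γ ^ t * stateDist P ρ p0 t s
      ≤ γ ^ t * 1 := mul_le_mul_of_nonneg_left
        (stateDist_le_one P hP0 hP1 ρ hρ0 hρ1 p0 hp00 hp01 t s) (pow_nonneg hγ0 t)
    _ = γ ^ t := mul_one _

lemma discDist_fixed {γ : ℝ} (hγ0 : 0 ≤ γ) (hγ1 : γ < 1)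
    (P : S → A → S → ℝ) (hP0 : ∀ s a s', 0 ≤ P s a s')
    (hP1 : ∀ s a, ∑ s', P s a s' = 1)
    (ρ : S → A → ℝ) (hρ0 : ∀ s a, 0 ≤ ρ s a) (hρ1 : ∀ s, ∑ a, ρ s a = 1)
    (p0 : S → ℝ) (hp00 : ∀ s, 0 ≤ p0 s) (hp01 : ∑ s, p0 s = 1) (s' : S) :
    discDist γ P ρ p0 s' = γ * nextDist P ρ (discDist γ P ρ p0) s' + (1 - γ) * p0 s' := by
  have hsum : ∀ x : S, Summable (fun t : ℕ => γ ^ t * stateDist P ρ p0 t x) :=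
    fun x => summable_geom_stateDist hγ0 hγ1 P hP0 hP1 ρ hρ0 hρ1 p0 hp00 hp01 x
  have hsumF : ∀ s a, Summable (fun t : ℕ =>
      (1 - γ) * (γ ^ t * stateDist P ρ p0 t s) * (ρ s a * P s a s')) :=
    fun s a => (((hsum s).mul_left (1 - γ)).mul_right (ρ s a * P s a s'))
  have h1 : nextDist P ρ (discDist γ P ρ p0) s'
      = (1 - γ) * ∑' t : ℕ, γ ^ t * stateDist P ρ p0 (t + 1) s' := by
    show (∑ s, ∑ a, discDist γ P ρ p0 s * ρ s a * P s a s') = _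
    have step : ∀ s a, discDist γ P ρ p0 s * ρ s a * P s a s'
        = ∑' t : ℕ, (1 - γ) * (γ ^ t * stateDist P ρ p0 t s) * (ρ s a * P s a s') := by
      intro s a
      unfold discDist
      rw [← tsum_mul_left, ← tsum_mul_right, ← tsum_mul_right]
      exact tsum_congr fun t => by ring
    simp_rw [step]
    have swap1 : ∀ s : S, ∑ a, ∑' t : ℕ,
        (1 - γ) * (γ ^ t * stateDist P ρ p0 t s) * (ρ s a * P s a s')
        = ∑' t : ℕ, ∑ a,
        (1 - γ) * (γ ^ t * stateDist P ρ p0 t s) * (ρ s a * P s a s') :=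
      fun s => (Summable.tsum_finsetSum fun a _ => hsumF s a).symm
    simp_rw [swap1]
    rw [← Summable.tsum_finsetSum fun s _ => summable_sum fun a _ => hsumF s a]
    calc (∑' t : ℕ, ∑ s, ∑ a,
          (1 - γ) * (γ ^ t * stateDist P ρ p0 t s) * (ρ s a * P s a s'))
        = ∑' t : ℕ, (1 - γ) * (γ ^ t * stateDist P ρ p0 (t + 1) s') := by
          refine tsum_congr fun t => ?_
          show _ = (1 - γ) * (γ ^ t * ∑ s, ∑ a, stateDist P ρ p0 t s * ρ s a * P s a s')
          simp only [Finset.mul_sum]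
          exact Finset.sum_congr rfl fun s _ => Finset.sum_congr rfl fun a _ => by ring
      _ = (1 - γ) * ∑' t : ℕ, γ ^ t * stateDist P ρ p0 (t + 1) s' := tsum_mul_left
  have hshift : Summable (fun t : ℕ => γ ^ t * stateDist P ρ p0 (t + 1) s') := by
    have := (summable_nat_add_iff 1).2 (hsum s')
    have h : ∀ t : ℕ, γ ^ (t + 1) * stateDist P ρ p0 (t + 1) s'
        = γ * (γ ^ t * stateDist P ρ p0 (t + 1) s') := fun t => by ring
    simp_rw [h] at this
    rcases eq_or_lt_of_le hγ0 with hγ | hγ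
    · apply Summable.of_nonneg_of_le
        (fun t => mul_nonneg (pow_nonneg hγ0 t) (stateDist_nonneg P hP0 ρ hρ0 p0 hp00 _ s'))
        (fun t => ?_) (summable_geometric_of_lt_one hγ0 hγ1)
      calc γ ^ t * stateDist P ρ p0 (t + 1) s' ≤ γ ^ t * 1 :=
            mul_le_mul_of_nonneg_left
              (stateDist_le_one P hP0 hP1 ρ hρ0 hρ1 p0 hp00 hp01 _ s') (pow_nonneg hγ0 t)
        _ = γ ^ t := mul_one _
    · exact (summable_mul_left_iff (ne_of_gt hγ)).mp this
  have h0 : discDist γ P ρ p0 s'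
      = (1 - γ) * p0 s' + γ * ((1 - γ) * ∑' t : ℕ, γ ^ t * stateDist P ρ p0 (t + 1) s') := by
    unfold discDist
    rw [Summable.tsum_eq_zero_add (hsum s')]
    have h : ∀ t : ℕ, γ ^ (t + 1) * stateDist P ρ p0 (t + 1) s'
        = γ * (γ ^ t * stateDist P ρ p0 (t + 1) s') := fun t => by ring
    simp_rw [h]
    rw [tsum_mul_left]
    show (1 - γ) * (1 * stateDist P ρ p0 0 s' + γ * _) = _
    show (1 - γ) * (1 * p0 s' + γ * _) = _
    ring
  rw [h1, h0]; ring

end Aux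

/-- If `d^μ(s) > 0` for all `s` and `μ(a|s) > 0` for all `(s,a)`, and
`w : S → ℝ` satisfies `L(w,f) = 0` for every `f : S → ℝ`, then `w(s) = d^π(s)/d^μ(s)`
for all `s`. -/
theorem L_eq_zero_implies_ratio {S A : Type} [Fintype S] [Fintype A]
    (γ : ℝ) (hγ0 : 0 < γ) (hγ1 : γ < 1)
    (P : S → A → S → ℝ) (hP0 : ∀ s a s', 0 ≤ P s a s') (hP1 : ∀ s a, ∑ s', P s a s' = 1)
    (p0 : S → ℝ) (hp00 : ∀ s, 0 ≤ p0 s) (hp01 : ∑ s, p0 s = 1)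
    (π : S → A → ℝ) (hπ0 : ∀ s a, 0 ≤ π s a) (hπ1 : ∀ s, ∑ a, π s a = 1)
    (μ : S → A → ℝ) (hμ0 : ∀ s a, 0 < μ s a) (hμ1 : ∀ s, ∑ a, μ s a = 1)
    (hdμ : ∀ s, 0 < discDist γ P μ p0 s)
    (w : S → ℝ) (hw : ∀ f : S → ℝ, Lfun γ P π μ (discDist γ P μ p0) p0 w f = 0) :
    ∀ s, w s = discDist γ P π p0 s / discDist γ P μ p0 s := by
  classical
  set dμ := discDist γ P μ p0 with hdμdef
  set dπ := discDist γ P π p0 with hdπdef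
  -- pointwise equation from indicator test functions
  have key : ∀ s0 : S,
      γ * (∑ s, ∑ a, dμ s * π s a * w s * P s a s0) + (1 - γ) * p0 s0 = w s0 * dμ s0 := by
    intro s0
    have h := hw (fun x => if x = s0 then 1 else 0)
    unfold Lfun at h
    simp only [mul_ite, mul_one, mul_zero, Finset.sum_ite_eq', Finset.mem_univ,
      if_true] at h
    -- h : γ * ∑ s, ∑ a, dμ s * μ s a * P s a s0 * (w s * (π s a / μ s a) - w s0)
    --     + (1 - γ) * (p0 s0 * (1 - w s0)) = 0
    have expand : ∀ s a, dμ s * μ s a * P s a s0 * (w s * (π s a / μ s a) - w s0)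
        = dμ s * π s a * w s * P s a s0 - dμ s * μ s a * P s a s0 * w s0 := by
      intro s a
      have hne : μ s a ≠ 0 := ne_of_gt (hμ0 s a)
      field_simp
    simp_rw [expand, Finset.sum_sub_distrib] at h
    have hfix : γ * (∑ s, ∑ a, dμ s * μ s a * P s a s0) + (1 - γ) * p0 s0 = dμ s0 := by
      have := discDist_fixed (le_of_lt hγ0) hγ1 P hP0 hP1 μ
        (fun s a => le_of_lt (hμ0 s a)) hμ1 p0 hp00 hp01 s0
      rw [← hdμdef] at this
      rw [this]; rfl
    have hsub : ∑ s, ∑ a, dμ s * μ s a * P s a s0 * w s0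
        = (∑ s, ∑ a, dμ s * μ s a * P s a s0) * w s0 := by
      rw [Finset.sum_mul]
      exact Finset.sum_congr rfl fun s _ => by rw [Finset.sum_mul]
    rw [hsub] at h
    linear_combination h + w s0 * hfix
  -- dπ fixed point
  have hπfix : ∀ s0 : S,
      γ * (∑ s, ∑ a, dπ s * π s a * P s a s0) + (1 - γ) * p0 s0 = dπ s0 := by
    intro s0
    have := discDist_fixed (le_of_lt hγ0) hγ1 P hP0 hP1 π hπ0 hπ1 p0 hp00 hp01 s0
    rw [← hdπdef] at this
    rw [this]; rfl
  -- error function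
  set e : S → ℝ := fun s => w s * dμ s - dπ s with hedef
  have he : ∀ s0, e s0 = γ * ∑ s, ∑ a, e s * π s a * P s a s0 := by
    intro s0
    have h1 := key s0
    have h2 := hπfix s0
    have h3 : ∑ s, ∑ a, e s * π s a * P s a s0
        = (∑ s, ∑ a, dμ s * π s a * w s * P s a s0)
          - ∑ s, ∑ a, dπ s * π s a * P s a s0 := by
      rw [← Finset.sum_sub_distrib]
      refine Finset.sum_congr rfl fun s _ => ?_
      rw [← Finset.sum_sub_distrib]
      exact Finset.sum_congr rfl fun a _ => by simp only [hedef]; ring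
    simp only [hedef]
    rw [h3]
    linarith
  -- ℓ¹ contraction
  have habs : ∀ s0, |e s0| ≤ γ * ∑ s, ∑ a, |e s| * π s a * P s a s0 := by
    intro s0
    rw [he s0, abs_mul, abs_of_pos hγ0]
    refine mul_le_mul_of_nonneg_left ?_ (le_of_lt hγ0)
    calc |∑ s, ∑ a, e s * π s a * P s a s0|
        ≤ ∑ s, |∑ a, e s * π s a * P s a s0| := Finset.abs_sum_le_sum_abs _ _
      _ ≤ ∑ s, ∑ a, |e s * π s a * P s a s0| :=
          Finset.sum_le_sum fun s _ => Finset.abs_sum_le_sum_abs _ _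
      _ = ∑ s, ∑ a, |e s| * π s a * P s a s0 := by
          refine Finset.sum_congr rfl fun s _ => Finset.sum_congr rfl fun a _ => ?_
          rw [abs_mul, abs_mul, abs_of_nonneg (hπ0 s a), abs_of_nonneg (hP0 s a s0)]
  have hT : ∑ s0, |e s0| ≤ γ * ∑ s, |e s| := by
    calc ∑ s0, |e s0| ≤ ∑ s0, γ * ∑ s, ∑ a, |e s| * π s a * P s a s0 :=
          Finset.sum_le_sum fun s0 _ => habs s0
      _ = γ * ∑ s0, ∑ s, ∑ a, |e s| * π s a * P s a s0 := by rw [← Finset.mul_sum]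
      _ = γ * ∑ s, |e s| := by
          congr 1
          rw [Finset.sum_comm]
          refine Finset.sum_congr rfl fun s _ => ?_
          rw [Finset.sum_comm]
          have h : ∀ a, ∑ s0, |e s| * π s a * P s a s0 = |e s| * π s a := by
            intro a; rw [← Finset.mul_sum, hP1 s a, mul_one]
          simp_rw [h, ← Finset.mul_sum, hπ1 s, mul_one]
  have hT0 : ∑ s, |e s| = 0 := by
    have hnn : (0:ℝ) ≤ ∑ s, |e s| := Finset.sum_nonneg fun s _ => abs_nonneg _
    nlinarith
  intro s
  have hes : e s = 0 := by
    have : |e s| = 0 := le_antisymm (by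
      calc |e s| ≤ ∑ s', |e s'| :=
            Finset.single_le_sum (f := fun s' => |e s'|) (fun s' _ => abs_nonneg _) (Finset.mem_univ s)
        _ = 0 := hT0) (abs_nonneg _)
    exact abs_eq_zero.mp this
  have : w s * dμ s = dπ s := by simpa [hedef, sub_eq_zero] using hes
  rw [eq_div_iff (ne_of_gt (hdμ s))]
  exact this
end
end

section
/- Let f : ℝ^d → ℝ be differentiable with L-Lipschitz gradient (L > 0) and bounded below. Consider iterates X_{k+1} = X_k − (1/L)(∇f(X_k) + D_k) with ‖E[D_k | F_k]‖ ≤ B_k and E[‖D_k‖² | F_k] ≤ 2(σ_k² + B_k²) almost surely, where F_k = σ(X_1, …, X_k). If the oracle errors vanish in Cesàro mean, i.e., lim_{K→∞} (1/K) Σ_{k=1}^K (σ_k² + B_k²) = 0, then lim_{K→∞} (1/K) Σ_{k=1}^K E[‖∇f(X_k)‖²] = 0. -/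
open MeasureTheory Filter RealInnerProductSpace

noncomputable section

private lemma descent_lemma' {d : ℕ} (f : EuclideanSpace ℝ (Fin d) → ℝ) (L : ℝ)
    (hf : Differentiable ℝ f)
    (hlip : ∀ x y, ‖gradient f x - gradient f y‖ ≤ L * ‖x - y‖)
    (x v : EuclideanSpace ℝ (Fin d)) :
    f (x + v) ≤ f x + ⟪gradient f x, v⟫ + L / 2 * ‖v‖ ^ 2 := by
  set φ : ℝ → ℝ := fun t => f (x + t • v) - t * ⟪gradient f x, v⟫ - L / 2 * t ^ 2 * ‖v‖ ^ 2
    with hφ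
  have hder : ∀ t : ℝ, HasDerivAt φ
      (⟪gradient f (x + t • v), v⟫ - ⟪gradient f x, v⟫ - L * t * ‖v‖ ^ 2) t := by
    intro t
    have h1 : HasDerivAt (fun s : ℝ => x + s • v) v t := by
      simpa using ((hasDerivAt_id t).smul_const v).const_add x
    have h2 : HasFDerivAt f (InnerProductSpace.toDual ℝ _ (gradient f (x + t • v))) (x + t • v) :=
      hasGradientAt_iff_hasFDerivAt.mp (hf (x + t • v)).hasGradientAt
    have h3 : HasDerivAt (fun s : ℝ => f (x + s • v)) ⟪gradient f (x + t • v), v⟫ t := by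
      exact (h2.comp_hasDerivAt t h1).congr_deriv InnerProductSpace.toDual_apply_apply
    have h4 : HasDerivAt (fun s : ℝ => s * ⟪gradient f x, v⟫) ⟪gradient f x, v⟫ t := by
      simpa using (hasDerivAt_id t).mul_const _
    have h5 : HasDerivAt (fun s : ℝ => L / 2 * s ^ 2 * ‖v‖ ^ 2) (L * t * ‖v‖ ^ 2) t := by
      have := ((hasDerivAt_pow 2 t).const_mul (L / 2)).mul_const (‖v‖ ^ 2)
      exact this.congr_deriv (by rw [show (2:ℕ)-1 = 1 from rfl]; push_cast; ring)
    exact (h3.sub h4).sub h5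
  have hanti : AntitoneOn φ (Set.Icc (0:ℝ) 1) := by
    apply antitoneOn_of_deriv_nonpos (convex_Icc 0 1)
    · exact fun t _ => (hder t).continuousAt.continuousWithinAt
    · exact fun t _ => (hder t).differentiableAt.differentiableWithinAt
    · intro t ht
      rw [interior_Icc] at ht
      rw [(hder t).deriv]
      have h6 : ⟪gradient f (x + t • v) - gradient f x, v⟫ ≤ L * t * ‖v‖ ^ 2 := by
        calc ⟪gradient f (x + t • v) - gradient f x, v⟫
            ≤ ‖gradient f (x + t • v) - gradient f x‖ * ‖v‖ := real_inner_le_norm _ _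
          _ ≤ (L * ‖(x + t • v) - x‖) * ‖v‖ :=
              mul_le_mul_of_nonneg_right (hlip _ _) (norm_nonneg _)
          _ = L * t * ‖v‖ ^ 2 := by
              rw [add_sub_cancel_left, norm_smul]
              simp [abs_of_pos ht.1]; ring
      rw [inner_sub_left] at h6
      linarith
  have h01 : φ 1 ≤ φ 0 := hanti (by norm_num) (by norm_num) zero_le_one
  simp only [hφ, one_smul, zero_smul, add_zero, one_pow, one_mul, zero_pow, mul_zero,
    zero_mul, sub_zero] at h01
  linarith

private lemma sgd_step' {d : ℕ} (f : EuclideanSpace ℝ (Fin d) → ℝ) (L : ℝ) (hL : 0 < L)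
    (hf : Differentiable ℝ f)
    (hlip : ∀ x y, ‖gradient f x - gradient f y‖ ≤ L * ‖x - y‖)
    (x D : EuclideanSpace ℝ (Fin d)) :
    f (x - (1/L) • (gradient f x + D)) ≤
      f x - (1/(2*L)) * ‖gradient f x‖ ^ 2 + (1/(2*L)) * ‖D‖ ^ 2 := by
  have h := descent_lemma' f L hf hlip x ((-(1/L)) • (gradient f x + D))
  rw [sub_eq_add_neg, ← neg_smul]
  set g := gradient f x
  have e1 : ⟪g, (-(1/L)) • (g + D)⟫ = (-(1/L)) * (‖g‖^2 + ⟪g, D⟫) := by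
    rw [real_inner_smul_right, inner_add_right, real_inner_self_eq_norm_sq]
  have e2 : ‖(-(1/L)) • (g + D)‖ ^ 2 = (1/L)^2 * (‖g‖^2 + 2*⟪g,D⟫ + ‖D‖^2) := by
    rw [norm_smul, mul_pow, ← norm_add_sq_real]
    simp [abs_of_pos (by positivity : (0:ℝ) < 1/L)]
  rw [e1, e2] at h
  have hL' : L ≠ 0 := ne_of_gt hL
  calc f (x + (-(1/L)) • (g + D)) ≤ _ := h
    _ = f x - (1/(2*L)) * ‖g‖ ^ 2 + (1/(2*L)) * ‖D‖ ^ 2 := by field_simp; ring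


private lemma twoL_cancel {L : ℝ} (hL : 0 < L) (x : ℝ) : 2*L*((1/(2*L))*x) = x := by
  field_simp

/-- Stochastic gradient descent with step size `1/L` and a biased noisy
gradient oracle whose errors vanish in Cesàro mean converges to a stationary point in
average-squared-gradient-norm:
if `lim_{K→∞} (1/K) Σ_{k=1}^K (σ k² + B k²) = 0` then
`lim_{K→∞} (1/K) Σ_{k=1}^K E‖∇f(X k)‖² = 0`. -/
theorem sgd_biased_oracle_stationarity {d : ℕ} {Ω : Type} [MeasurableSpace Ω]
    (ℙ : Measure Ω) [IsProbabilityMeasure ℙ]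
    (f : EuclideanSpace ℝ (Fin d) → ℝ) (L : ℝ) (hL : 0 < L)
    (hf : Differentiable ℝ f)
    (hlip : ∀ x y, ‖gradient f x - gradient f y‖ ≤ L * ‖x - y‖)
    (hbdd : BddBelow (Set.range f))
    (X D : ℕ → Ω → EuclideanSpace ℝ (Fin d))
    (hXmeas : ∀ k, Measurable (X k)) (hDmeas : ∀ k, Measurable (D k))
    (hX1int : Integrable (fun ω => f (X 1 ω)) ℙ)
    (hrec : ∀ k, 1 ≤ k →
      X (k + 1) = fun ω => X k ω - (1 / L) • (gradient f (X k ω) + D k ω))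
    (B σ' : ℕ → ℝ) (hB : ∀ k, 0 ≤ B k) (hσ : ∀ k, 0 ≤ σ' k)
    (F : ℕ → MeasurableSpace Ω)
    (hF : ∀ k, F k = ⨆ i ∈ Finset.Icc 1 k, MeasurableSpace.comap (X i) inferInstance)
    (hDint : ∀ k, Integrable (D k) ℙ)
    (hDsq : ∀ k, Integrable (fun ω => ‖D k ω‖ ^ 2) ℙ)
    (hbias : ∀ k, 1 ≤ k → ∀ᵐ ω ∂ℙ, ‖(ℙ[D k | F k]) ω‖ ≤ B k)
    (hvar : ∀ k, 1 ≤ k → ∀ᵐ ω ∂ℙ,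
      (ℙ[(fun ω' => ‖D k ω'‖ ^ 2) | F k]) ω ≤ 2 * (σ' k ^ 2 + B k ^ 2))
    (hcesaro : Tendsto
      (fun K : ℕ => (1 / (K : ℝ)) * ∑ k ∈ Finset.Icc 1 K, (σ' k ^ 2 + B k ^ 2))
      atTop (nhds 0)) :
    Tendsto
      (fun K : ℕ => (1 / (K : ℝ)) * ∑ k ∈ Finset.Icc 1 K, ∫ ω, ‖gradient f (X k ω)‖ ^ 2 ∂ℙ)
      atTop (nhds 0) := by
  obtain ⟨m, hm⟩ := hbdd
  have hmle : ∀ x, m ≤ f x := fun x => hm (Set.mem_range_self x)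
  have hgcont : Continuous (fun x => gradient f x) :=
    (LipschitzWith.of_dist_le_mul (K := L.toNNReal) (fun x y => by
      simpa [dist_eq_norm, Real.coe_toNNReal L hL.le] using hlip x y)).continuous
  have fmeas : ∀ k, AEStronglyMeasurable (fun ω => f (X k ω)) ℙ := fun k =>
    (hf.continuous.measurable.comp (hXmeas k)).aestronglyMeasurable
  have gmeas : ∀ k, AEStronglyMeasurable (fun ω => ‖gradient f (X k ω)‖ ^ 2) ℙ := fun k =>
    (((hgcont.norm.pow 2).measurable).comp (hXmeas k)).aestronglyMeasurable
  have hL2 : (0:ℝ) < 1/(2*L) := by positivity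
  -- pointwise descent step
  have step : ∀ k, 1 ≤ k → ∀ ω, f (X (k+1) ω) ≤
      f (X k ω) - (1/(2*L)) * ‖gradient f (X k ω)‖^2 + (1/(2*L)) * ‖D k ω‖^2 := by
    intro k hk ω
    rw [hrec k hk]
    exact sgd_step' f L hL hf hlip (X k ω) (D k ω)
  -- integrability of f (X k)
  have hfint : ∀ k, 1 ≤ k → Integrable (fun ω => f (X k ω)) ℙ := by
    intro k hk
    induction k with
    | zero => omega
    | succ n ih =>
      rcases Nat.lt_or_ge n 1 with h | hn
      · have : n = 0 := by omega
        subst this; exact hX1int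
      · have ihn := ih hn
        have hint : Integrable
            (fun ω => |m| + |f (X n ω) + (1/(2*L)) * ‖D n ω‖^2|) ℙ :=
          (integrable_const (|m|)).add (ihn.add ((hDsq n).const_mul (1/(2*L)))).abs
        apply Integrable.mono' hint (fmeas (n+1))
        filter_upwards with ω
        rw [Real.norm_eq_abs, abs_le]
        have h1 := step n hn ω
        have h2 : (0:ℝ) ≤ (1/(2*L)) * ‖gradient f (X n ω)‖^2 := by positivity
        have h3 := hmle (X (n+1) ω)
        have h4 := le_abs_self (f (X n ω) + (1/(2*L)) * ‖D n ω‖^2)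
        have h5 := neg_abs_le m
        have h6 := abs_nonneg (f (X n ω) + (1/(2*L)) * ‖D n ω‖^2)
        have h7 := abs_nonneg m
        constructor <;> linarith
  -- integrability of ‖∇f (X k)‖²
  have hgint : ∀ k, 1 ≤ k → Integrable (fun ω => ‖gradient f (X k ω)‖^2) ℙ := by
    intro k hk
    have hint : Integrable (fun ω => |2*L*(f (X k ω) - m) + ‖D k ω‖^2|) ℙ :=
      ((((hfint k hk).sub (integrable_const m)).const_mul (2*L)).add (hDsq k)).abs
    apply Integrable.mono' hint (gmeas k)
    filter_upwards with ω
    rw [Real.norm_eq_abs, abs_of_nonneg (by positivity)]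
    have h1 := step k hk ω
    have h3 := hmle (X (k+1) ω)
    have h4 := le_abs_self (2*L*(f (X k ω) - m) + ‖D k ω‖^2)
    have h5 : (1/(2*L)) * ‖gradient f (X k ω)‖^2 ≤
        (f (X k ω) - m) + (1/(2*L)) * ‖D k ω‖^2 := by linarith
    have h6 := mul_le_mul_of_nonneg_left h5 (by positivity : (0:ℝ) ≤ 2*L)
    have e1 := twoL_cancel hL (‖gradient f (X k ω)‖^2)
    have e2 := twoL_cancel hL (‖D k ω‖^2)
    have e3 : 2*L*((f (X k ω) - m) + (1/(2*L)) * ‖D k ω‖^2)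
        = 2*L*(f (X k ω) - m) + 2*L*((1/(2*L)) * ‖D k ω‖^2) := by ring
    linarith
  -- second moment bound on the error
  have hDbound : ∀ k, 1 ≤ k → ∫ ω, ‖D k ω‖^2 ∂ℙ ≤ 2*(σ' k^2 + B k^2) := by
    intro k hk
    have hm0 : F k ≤ (inferInstance : MeasurableSpace Ω) := by
      rw [hF k]
      exact iSup₂_le fun i _ => measurable_iff_comap_le.mp (hXmeas i)
    calc ∫ ω, ‖D k ω‖^2 ∂ℙ
        = ∫ ω, (ℙ[(fun ω' => ‖D k ω'‖^2)|F k]) ω ∂ℙ := (integral_condExp hm0).symm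
      _ ≤ ∫ _ω, 2*(σ' k^2 + B k^2) ∂ℙ :=
          integral_mono_ae integrable_condExp (integrable_const _) (hvar k hk)
      _ = 2*(σ' k^2 + B k^2) := by simp
  -- expected one-step inequality
  have Efstep : ∀ k, 1 ≤ k → ∫ ω, ‖gradient f (X k ω)‖^2 ∂ℙ ≤
      2*L*((∫ ω, f (X k ω) ∂ℙ) - (∫ ω, f (X (k+1) ω) ∂ℙ)) + 2*(σ' k^2 + B k^2) := by
    intro k hk
    have ig1 : Integrable (fun ω => f (X k ω) - (1/(2*L)) * ‖gradient f (X k ω)‖^2) ℙ :=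
      (hfint k hk).sub ((hgint k hk).const_mul _)
    have ig2 : Integrable (fun ω => (1/(2*L)) * ‖D k ω‖^2) ℙ := (hDsq k).const_mul _
    have h1 : ∫ ω, f (X (k+1) ω) ∂ℙ ≤
        ∫ ω, (f (X k ω) - (1/(2*L)) * ‖gradient f (X k ω)‖^2 + (1/(2*L)) * ‖D k ω‖^2) ∂ℙ :=
      integral_mono (hfint (k+1) (by omega)) (ig1.add ig2) (step k hk)
    rw [integral_add ig1 ig2, integral_sub (hfint k hk) ((hgint k hk).const_mul _),
      integral_const_mul, integral_const_mul] at h1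
    have h2 := hDbound k hk
    have h5 : (1/(2*L)) * ∫ ω, ‖gradient f (X k ω)‖^2 ∂ℙ ≤
        ((∫ ω, f (X k ω) ∂ℙ) - (∫ ω, f (X (k+1) ω) ∂ℙ))
          + (1/(2*L)) * (2*(σ' k^2 + B k^2)) := by
      have h6 := mul_le_mul_of_nonneg_left h2 hL2.le
      linarith
    have h6 := mul_le_mul_of_nonneg_left h5 (by positivity : (0:ℝ) ≤ 2*L)
    have e1 := twoL_cancel hL (∫ ω, ‖gradient f (X k ω)‖^2 ∂ℙ)
    have e2 := twoL_cancel hL (2*(σ' k^2 + B k^2))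
    have e3 : 2*L*(((∫ ω, f (X k ω) ∂ℙ) - (∫ ω, f (X (k+1) ω) ∂ℙ))
          + (1/(2*L)) * (2*(σ' k^2 + B k^2)))
        = 2*L*((∫ ω, f (X k ω) ∂ℙ) - (∫ ω, f (X (k+1) ω) ∂ℙ))
          + 2*L*((1/(2*L)) * (2*(σ' k^2 + B k^2))) := by ring
    linarith
  -- telescoping sum bound
  have sumbound' : ∀ K : ℕ, ∑ k ∈ Finset.Icc 1 K, ∫ ω, ‖gradient f (X k ω)‖^2 ∂ℙ ≤
      2*L*((∫ ω, f (X 1 ω) ∂ℙ) - (∫ ω, f (X (K+1) ω) ∂ℙ))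
        + ∑ k ∈ Finset.Icc 1 K, 2*(σ' k^2 + B k^2) := by
    intro K
    induction K with
    | zero => simp
    | succ n ih =>
      rw [Finset.sum_Icc_succ_top (by omega : 1 ≤ n+1),
        Finset.sum_Icc_succ_top (by omega : 1 ≤ n+1)]
      have h1 := Efstep (n+1) (by omega)
      linarith
  have ha_ge : ∀ k, 1 ≤ k → m ≤ ∫ ω, f (X k ω) ∂ℙ := by
    intro k hk
    calc m = ∫ _ω, m ∂ℙ := by simp
      _ ≤ _ := integral_mono (integrable_const m) (hfint k hk) (fun ω => hmle _)
  set C : ℝ := 2*L*((∫ ω, f (X 1 ω) ∂ℙ) - m) with hC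
  have sumbound : ∀ K : ℕ, ∑ k ∈ Finset.Icc 1 K, ∫ ω, ‖gradient f (X k ω)‖^2 ∂ℙ ≤
      C + 2 * ∑ k ∈ Finset.Icc 1 K, (σ' k^2 + B k^2) := by
    intro K
    have h1 := sumbound' K
    have h2 := ha_ge (K+1) (by omega)
    have h3 : ∑ k ∈ Finset.Icc 1 K, 2*(σ' k^2 + B k^2)
        = 2 * ∑ k ∈ Finset.Icc 1 K, (σ' k^2 + B k^2) := by
      rw [Finset.mul_sum]
    nlinarith
  -- squeeze
  have hub : Tendsto (fun K : ℕ => C * (1/(K:ℝ))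
      + 2 * ((1/(K:ℝ)) * ∑ k ∈ Finset.Icc 1 K, (σ' k^2 + B k^2))) atTop (nhds 0) := by
    have t1 : Tendsto (fun K : ℕ => C * (1/(K:ℝ))) atTop (nhds 0) := by
      simpa using tendsto_one_div_atTop_nhds_zero_nat.const_mul C
    have t2 := hcesaro.const_mul 2
    simpa using t1.add t2
  apply squeeze_zero (fun K => ?_) (fun K => ?_) hub
  · exact mul_nonneg (by positivity)
      (Finset.sum_nonneg fun k _ => integral_nonneg fun ω => by positivity)
  · have h1 := mul_le_mul_of_nonneg_left (sumbound K)
      (show (0:ℝ) ≤ 1/(K:ℝ) by positivity)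
    calc (1/(K:ℝ)) * ∑ k ∈ Finset.Icc 1 K, ∫ ω, ‖gradient f (X k ω)‖^2 ∂ℙ
        ≤ (1/(K:ℝ)) * (C + 2 * ∑ k ∈ Finset.Icc 1 K, (σ' k^2 + B k^2)) := h1
      _ = C * (1/(K:ℝ)) + 2 * ((1/(K:ℝ)) * ∑ k ∈ Finset.Icc 1 K, (σ' k^2 + B k^2)) := by
          ring
end
end
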